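/- Let R be a Noetherian ring of prime characteristic p > 0 and M a finitely generated R⟨F⟩-module, where R⟨F⟩ = R{F}/(r^p F − F r : r ∈ R). Then the support of M as an R-module is a Zariski closed subset of Spec R. -/
import Mathlib


/-- Let `R` be a Noetherian ring of prime characteristic `p > 0` and `M`
a finitely generated left module over the twisted polynomial ring `R⟨F⟩`, i.e. an
`R`-module equipped with an additive map `F : M → M` with `F (r • m) = r^p • F m`, which is
generated over `R⟨F⟩` by finitely many elements (no proper `R`-submodule containing them is
stable under `F`).  Then the support of `M` as an `R`-module is Zariski closed. -/
theorem statement17 (R : Type) [CommRing R] [IsNoetherianRing R]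
    (p : ℕ) [Fact p.Prime] [CharP R p]
    (M : Type) [AddCommGroup M] [Module R M]
    (F : M → M)
    (hadd : ∀ x y : M, F (x + y) = F x + F y)
    (hplin : ∀ (r : R) (x : M), F (r • x) = r ^ p • F x)
    (hfg : ∃ s : Finset M, ∀ N : Submodule R M,
      (s : Set M) ⊆ N → (∀ x ∈ N, F x ∈ N) → N = ⊤) :
    IsClosed (Module.support R M) := by
  obtain ⟨s, hs⟩ := hfg
  have hF0 : F 0 = 0 := by
    have := hadd 0 0
    rw [add_zero] at this
    exact left_eq_add.mp this
  have key : Module.support R M =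
      PrimeSpectrum.zeroLocus ((Submodule.span R (s : Set M)).annihilator : Set R) := by
    ext 𝔭
    constructor
    · -- 𝔭 ∈ support → ann(span s) ≤ 𝔭 ; contrapositive
      rw [← not_imp_not]
      intro h𝔭 hsupp
      -- get r ∈ ann(span s) with r ∉ 𝔭
      rw [PrimeSpectrum.mem_zeroLocus, Set.not_subset] at h𝔭
      obtain ⟨r, hr_ann, hr_not⟩ := h𝔭
      -- the 𝔭-torsion submodule
      set N : Submodule R M :=
        { carrier := {m : M | ∃ c ∉ 𝔭.asIdeal, c • m = 0}
          add_mem' := by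
            rintro a b ⟨c, hc, hca⟩ ⟨d, hd, hdb⟩
            refine ⟨c * d, 𝔭.asIdeal.primeCompl.mul_mem hc hd, ?_⟩
            rw [smul_add, mul_comm c d, mul_smul, hca, smul_zero, zero_add, mul_smul, smul_comm, hdb,
              smul_zero]
          zero_mem' := ⟨1, 𝔭.asIdeal.primeCompl.one_mem, smul_zero 1⟩
          smul_mem' := by
            rintro t a ⟨c, hc, hca⟩
            exact ⟨c, hc, by rw [smul_comm, hca, smul_zero]⟩ } with hN
      have hNtop : N = ⊤ := by
        refine hs N ?_ ?_
        · intro m hm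
          refine ⟨r, hr_not, ?_⟩
          exact (Submodule.mem_annihilator_span _ r).mp hr_ann ⟨m, hm⟩
        · rintro x ⟨c, hc, hcx⟩
          refine ⟨c ^ p, fun h ↦ hc (Ideal.IsPrime.mem_of_pow_mem 𝔭.2 p h), ?_⟩
          rw [← hplin, hcx, hF0]
      rw [Module.mem_support_iff'] at hsupp
      obtain ⟨m, hm⟩ := hsupp
      have : m ∈ N := hNtop ▸ Submodule.mem_top
      obtain ⟨c, hc, hcm⟩ := this
      exact hm c hc hcm
    · -- ann(span s) ≤ 𝔭 → 𝔭 ∈ support ; contrapositive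
      rw [← not_imp_not]
      intro hsupp
      rw [Module.notMem_support_iff'] at hsupp
      choose c hc hc0 using hsupp
      rw [PrimeSpectrum.mem_zeroLocus, Set.not_subset]
      refine ⟨∏ m ∈ s.attach, c m, ?_, ?_⟩
      · rw [SetLike.mem_coe, Submodule.mem_annihilator_span]
        rintro ⟨m, hm⟩
        obtain ⟨k, hk⟩ := Finset.dvd_prod_of_mem (fun m : {x // x ∈ s} ↦ c ↑m)
          (Finset.mem_attach s ⟨m, Finset.mem_coe.mp hm⟩)
        simp only
        rw [hk, mul_comm, mul_smul, hc0, smul_zero]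
      · exact 𝔭.asIdeal.primeCompl.prod_mem fun m _ ↦ hc m
  rw [key]
  exact PrimeSpectrum.isClosed_zeroLocus _
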